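/- Let G be a graph, R a 2-cluster modulator with G − R the disjoint union of cliques on S and S′, Q ⊆ V(G)∖R, and let (C′_1, …, C′_{γ′}) be a Grundy coloring of G[Q ∪ R] that is extendable (i.e., it occurs as a subsequence of some optimal Grundy coloring of G in which every class containing a vertex of R lies in the subsequence and all other classes are disjoint from R ∪ Q). Then the Grundy number of G equals γ′ + max{|S∖Q|, |S′∖Q|}. -/

import Mathlib

variable {V : Type*} [Fintype V] [DecidableEq V]

/-- A Grundy coloring of the vertex set `X` of `G`: an ordered partition of `X`
into nonempty independent sets such that every vertex of the `i`-th class has a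
neighbor in every earlier class. -/
def GrundyColoringOn (G : SimpleGraph V) (X : Finset V) (C : List (Finset V)) : Prop :=
  (∀ A ∈ C, A.Nonempty) ∧
  C.Pairwise Disjoint ∧
  (∀ v, v ∈ X ↔ ∃ A ∈ C, v ∈ A) ∧
  (∀ A ∈ C, ∀ u ∈ A, ∀ w ∈ A, ¬ G.Adj u w) ∧
  (∀ i j : ℕ, ∀ hi : i < C.length, ∀ hj : j < C.length, j < i →
     ∀ v ∈ C.get ⟨i, hi⟩, ∃ u ∈ C.get ⟨j, hj⟩, G.Adj u v)

/-- The set of lengths of Grundy colorings of `X` in `G`; its greatest element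
is the Grundy number of the induced subgraph `G[X]`. -/
def grundySet (G : SimpleGraph V) (X : Finset V) : Set ℕ :=
  {n | ∃ C : List (Finset V), GrundyColoringOn G X C ∧ C.length = n}

/-- If a Grundy coloring of `G[Q ∪ R]` is extendable (it is a subsequence of some optimal
Grundy coloring of `G` in which every class meeting `R` belongs to the subsequence and all
other classes avoid `R ∪ Q`), then the Grundy number of `G` is
`γ' + max {|S ∖ Q|, |S' ∖ Q|}`. -/
theorem stmt13 (G : SimpleGraph V) (R S S' : Finset V)
    (hdisj : Disjoint S S') (hcover : S ∪ S' = Finset.univ \ R)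
    (hSne : S.Nonempty) (hS'ne : S'.Nonempty)
    (hS : G.IsClique ↑S) (hS' : G.IsClique ↑S')
    (hsep : ∀ u ∈ S, ∀ v ∈ S', ¬ G.Adj u v)
    (Q : Finset V) (hQ : Q ⊆ Finset.univ \ R)
    (C' : List (Finset V)) (hC' : GrundyColoringOn G (Q ∪ R) C')
    (γ : ℕ) (hγ : IsGreatest (grundySet G Finset.univ) γ)
    (hext : ∃ C : List (Finset V), GrundyColoringOn G Finset.univ C ∧ C.length = γ ∧
      C'.Sublist C ∧
      (∀ A ∈ C, (∃ v ∈ A, v ∈ R) → A ∈ C') ∧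
      (∀ A ∈ C, A ∉ C' → ∀ v ∈ A, v ∉ R ∪ Q)) :
    γ = C'.length + max (S \ Q).card (S' \ Q).card := by
  classical
  obtain ⟨C, hC, hlen, hsub, hmeet, havoid⟩ := hext
  obtain ⟨hne, hpw, hcov, hind, hgr⟩ := hC
  obtain ⟨_, _, hC'cov, _, _⟩ := hC'
  -- basic facts about S, S'
  have hSsub : ∀ v ∈ S, v ∉ R := by
    intro v hv
    have : v ∈ Finset.univ \ R := hcover ▸ Finset.mem_union_left _ hv
    exact (Finset.mem_sdiff.mp this).2
  have hS'sub : ∀ v ∈ S', v ∉ R := by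
    intro v hv
    have : v ∈ Finset.univ \ R := hcover ▸ Finset.mem_union_right _ hv
    exact (Finset.mem_sdiff.mp this).2
  -- C has no duplicates
  have hnodup : C.Nodup := by
    have : C.Pairwise (· ≠ ·) := by
      refine List.Pairwise.imp_of_mem ?_ hpw
      intro A B hA hB hAB hEq
      obtain ⟨a, ha⟩ := hne A hA
      exact (Finset.disjoint_left.mp hAB) ha (hEq ▸ ha)
    exact this
  have hgetinj : Function.Injective C.get := List.nodup_iff_injective_get.mp hnodup
  have hdisjget : ∀ i j : Fin C.length, i ≠ j → Disjoint (C.get i) (C.get j) := by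
    intro i j hij
    rcases lt_or_gt_of_ne hij with h | h
    · exact List.pairwise_iff_get.mp hpw i j h
    · exact (List.pairwise_iff_get.mp hpw j i h).symm
  set T : Finset (Fin C.length) :=
    Finset.univ.filter (fun i => C.get i ∉ C') with hT
  -- classes not in C' avoid R and Q, live in S ∪ S'
  have hfree : ∀ i ∈ T, ∀ w ∈ C.get i, w ∈ S ∪ S' ∧ w ∉ Q := by
    intro i hi w hw
    have hAC : C.get i ∈ C := C.get_mem _
    have hnotC' : C.get i ∉ C' := (Finset.mem_filter.mp hi).2
    have h1 := havoid _ hAC hnotC' w hw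
    have hwR : w ∉ R := fun h => h1 (Finset.mem_union_left _ h)
    have hwQ : w ∉ Q := fun h => h1 (Finset.mem_union_right _ h)
    have : w ∈ Finset.univ \ R := Finset.mem_sdiff.mpr ⟨Finset.mem_univ _, hwR⟩
    exact ⟨hcover ▸ this, hwQ⟩
  -- |Tᶜ| = C'.length
  have hTc : Tᶜ.card = C'.length := by
    have hC'nodup : C'.Nodup := hsub.nodup hnodup
    have himg : Tᶜ.image C.get = C'.toFinset := by
      ext A
      simp only [Finset.mem_image, Finset.mem_compl, hT, Finset.mem_filter,
        Finset.mem_univ, true_and, not_not, List.mem_toFinset]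
      constructor
      · rintro ⟨i, hi, rfl⟩; exact hi
      · intro hA
        obtain ⟨i, hi⟩ := List.mem_iff_get.mp (hsub.subset hA)
        exact ⟨i, hi ▸ hA, hi⟩
    have := Finset.card_image_of_injective Tᶜ hgetinj
    rw [himg] at this
    rw [← this, List.toFinset_card_of_nodup hC'nodup]
  -- each class meets S (resp. S') in at most one vertex
  have honeS : ∀ i : Fin C.length, (C.get i ∩ S).card ≤ 1 := by
    intro i
    refine Finset.card_le_one.mpr ?_
    intro a ha b hb
    by_contra hab
    have h1 := Finset.mem_inter.mp ha
    have h2 := Finset.mem_inter.mp hb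
    exact hind _ (C.get_mem _) a h1.1 b h2.1
      (hS (Finset.mem_coe.mpr h1.2) (Finset.mem_coe.mpr h2.2) hab)
  have honeS' : ∀ i : Fin C.length, (C.get i ∩ S').card ≤ 1 := by
    intro i
    refine Finset.card_le_one.mpr ?_
    intro a ha b hb
    by_contra hab
    have h1 := Finset.mem_inter.mp ha
    have h2 := Finset.mem_inter.mp hb
    exact hind _ (C.get_mem _) a h1.1 b h2.1
      (hS' (Finset.mem_coe.mpr h1.2) (Finset.mem_coe.mpr h2.2) hab)
  -- max ≤ T.card
  have hmax_le : ∀ Y : Finset V, (∀ v ∈ Y, v ∉ R) → (∀ i, (C.get i ∩ Y).card ≤ 1) →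
      (Y \ Q).card ≤ T.card := by
    intro Y hYR hone
    have hsubset : Y \ Q ⊆ T.biUnion (fun i => C.get i ∩ Y) := by
      intro s hs
      obtain ⟨hsY, hsQ⟩ := Finset.mem_sdiff.mp hs
      obtain ⟨A, hA, hsA⟩ := (hcov s).mp (Finset.mem_univ s)
      obtain ⟨i, hi⟩ := List.mem_iff_get.mp hA
      have hiT : i ∈ T := by
        rw [hT, Finset.mem_filter]
        refine ⟨Finset.mem_univ _, fun hmem => ?_⟩
        have : s ∈ Q ∪ R := (hC'cov s).mpr ⟨_, hi ▸ hmem, hsA⟩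
        rcases Finset.mem_union.mp this with h | h
        · exact hsQ h
        · exact hYR s hsY h
      exact Finset.mem_biUnion.mpr ⟨i, hiT, Finset.mem_inter.mpr ⟨hi ▸ hsA, hsY⟩⟩
    calc (Y \ Q).card ≤ (T.biUnion (fun i => C.get i ∩ Y)).card := Finset.card_le_card hsubset
      _ ≤ ∑ i ∈ T, (C.get i ∩ Y).card := Finset.card_biUnion_le
      _ ≤ ∑ _i ∈ T, 1 := Finset.sum_le_sum (fun i _ => hone i)
      _ = T.card := by simp
  -- T.card ≤ max
  have hT_le : T.card ≤ max (S \ Q).card (S' \ Q).card := by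
    rcases T.eq_empty_or_nonempty with hTe | hTne
    · simp [hTe]
    obtain ⟨s0, hs0⟩ := hSne
    set m := T.max' hTne with hm
    have hmT : m ∈ T := T.max'_mem hTne
    obtain ⟨v, hv⟩ := hne _ (C.get_mem m)
    obtain ⟨hvSS, hvQ⟩ := hfree m hmT v hv
    -- key: all classes in T meet side Y if the last one does
    have key : ∀ Y : Finset V, (∀ u ∈ Y, ∀ w ∈ S ∪ S', w ∉ Y → ¬ G.Adj u w) →
        v ∈ Y → T.card ≤ (Y \ Q).card := by
      intro Y hYsep hvY
      have hall : ∀ i ∈ T, ∃ s, s ∈ C.get i ∧ s ∈ Y ∧ s ∉ Q := by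
        intro i hi
        rcases eq_or_lt_of_le (T.le_max' i hi) with heq | hlt
        · rw [heq, ← hm]
          exact ⟨v, by simpa using hv, hvY, hvQ⟩
        · have hij : (i : ℕ) < (m : ℕ) := hlt
          obtain ⟨u, hu, hadj⟩ := hgr m i m.2 i.2 hij v (by simpa using hv)
          have hu' : u ∈ C.get i := by simpa using hu
          obtain ⟨huSS, huQ⟩ := hfree i hi u hu'
          have huY : u ∈ Y := by
            by_contra huY
            exact hYsep v hvY u huSS huY hadj.symm
          exact ⟨u, hu', huY, huQ⟩
      have hall' : ∀ i : Fin C.length, ∃ s : V, i ∈ T → s ∈ C.get i ∧ s ∈ Y ∧ s ∉ Q := by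
        intro i
        by_cases h : i ∈ T
        · obtain ⟨s, hs⟩ := hall i h; exact ⟨s, fun _ => hs⟩
        · exact ⟨s0, fun h' => absurd h' h⟩
      choose f hf using hall'
      refine Finset.card_le_card_of_injOn f (fun i hi => ?_) (fun i hi j hj hfij => ?_)
      · obtain ⟨_, h2, h3⟩ := hf i hi
        exact Finset.mem_sdiff.mpr ⟨h2, h3⟩
      · by_contra hij
        have h1 := (hf i hi).1
        have h2 := (hf j hj).1
        exact (Finset.disjoint_left.mp (hdisjget i j hij)) h1 (hfij ▸ h2)
    rcases Finset.mem_union.mp hvSS with hvS | hvS'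
    · refine le_trans (key S ?_ hvS) (le_max_left _ _)
      intro u hu w hw hwS hadj
      rcases Finset.mem_union.mp hw with h | h
      · exact hwS h
      · exact hsep u hu w h hadj
    · refine le_trans (key S' ?_ hvS') (le_max_right _ _)
      intro u hu w hw hwS' hadj
      rcases Finset.mem_union.mp hw with h | h
      · exact hsep w h u hu hadj.symm
      · exact hwS' h
  have hle : max (S \ Q).card (S' \ Q).card ≤ T.card :=
    max_le (hmax_le S hSsub honeS) (hmax_le S' hS'sub honeS')
  have hTcard : T.card = max (S \ Q).card (S' \ Q).card := le_antisymm hT_le hle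
  have hsum : T.card + Tᶜ.card = C.length := by
    rw [Finset.card_add_card_compl, Fintype.card_fin]
  omega
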